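/- arXiv:0707.0698 — 2 statements merged into one kernel-verified Lean document; each statement's English description precedes it below -/
import Mathlib

section
/- A proper ideal I of 𝕂̃ is prime if and only if I is pseudoprime and radical; explicitly, if and only if (for every S ⊆ (0,1), e_S ∈ I or e_{∁S} ∈ I) and (for every x ∈ I, the class of the net (√|x_ε|)_ε belongs to I, where (x_ε)_ε is any representative of x). -/
noncomputable section

set_option maxHeartbeats 1000000
set_option synthInstance.maxHeartbeats 400000

open scoped Classical

/-- The index set `(0,1) ⊆ ℝ` of the nets. -/
abbrev Eps : Type := Set.Ioo (0:ℝ) 1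

variable (K : Type) [RCLike K]

/-- A net `(x_ε)_{ε ∈ (0,1)}` is moderate if `|x_ε| ≤ ε^a` for some `a ∈ ℝ`,
for all sufficiently small `ε`. -/
def IsModerate (x : Eps → K) : Prop :=
  ∃ a : ℝ, ∃ ε₀ ∈ Set.Ioo (0:ℝ) 1, ∀ ε : Eps, (ε : ℝ) ≤ ε₀ → ‖x ε‖ ≤ (ε : ℝ) ^ a

/-- A net `(x_ε)_{ε ∈ (0,1)}` is negligible if for every `a ∈ ℝ`, `|x_ε| ≤ ε^a`
for all sufficiently small `ε`. -/
def IsNegligible (x : Eps → K) : Prop :=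
  ∀ a : ℝ, ∃ ε₀ ∈ Set.Ioo (0:ℝ) 1, ∀ ε : Eps, (ε : ℝ) ≤ ε₀ → ‖x ε‖ ≤ (ε : ℝ) ^ a

theorem rpow_two_bound {ε : ℝ} (h0 : 0 < ε) (h2 : ε ≤ 1/2) (a b : ℝ) :
    ε ^ a + ε ^ b ≤ ε ^ (min a b - 1) := by
  have h1 : ε ≤ 1 := h2.trans (by norm_num)
  have ha : ε ^ a ≤ ε ^ min a b :=
    Real.rpow_le_rpow_of_exponent_ge h0 h1 (min_le_left a b)
  have hb : ε ^ b ≤ ε ^ min a b :=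
    Real.rpow_le_rpow_of_exponent_ge h0 h1 (min_le_right a b)
  have key : 2 * ε ^ min a b ≤ ε ^ (min a b - 1) := by
    rw [Real.rpow_sub h0, Real.rpow_one, le_div_iff₀ h0]
    have hx : (0:ℝ) ≤ ε ^ min a b := (Real.rpow_pos_of_pos h0 _).le
    calc 2 * ε ^ min a b * ε ≤ 2 * ε ^ min a b * (1/2) := by
          apply mul_le_mul_of_nonneg_left h2 (by positivity)
      _ = ε ^ min a b := by ring
  calc ε ^ a + ε ^ b ≤ 2 * ε ^ min a b := by linarith
    _ ≤ ε ^ (min a b - 1) := key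

/-- The ring of moderate nets, as a subring of `K^{(0,1)}`. -/
def Moderate : Subring (Eps → K) where
  carrier := {x | IsModerate K x}
  zero_mem' := by
    refine ⟨0, 1/2, by constructor <;> norm_num, fun ε _ => ?_⟩
    simp [Real.rpow_zero]
  one_mem' := by
    refine ⟨0, 1/2, by constructor <;> norm_num, fun ε _ => ?_⟩
    simp [Real.rpow_zero]
  add_mem' := by
    rintro x y ⟨a, ε₀, h₀, ha⟩ ⟨b, ε₁, h₁, hb⟩
    refine ⟨min a b - 1, min (min ε₀ ε₁) (1/2), ⟨lt_min (lt_min h₀.1 h₁.1) (by norm_num), ?_⟩,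
      fun ε hε => ?_⟩
    · calc min (min ε₀ ε₁) (1/2) ≤ 1/2 := min_le_right _ _
        _ < 1 := by norm_num
    · have hε₀ : (ε:ℝ) ≤ ε₀ := le_trans hε (le_trans (min_le_left _ _) (min_le_left _ _))
      have hε₁ : (ε:ℝ) ≤ ε₁ := le_trans hε (le_trans (min_le_left _ _) (min_le_right _ _))
      have hε2 : (ε:ℝ) ≤ 1/2 := le_trans hε (min_le_right _ _)
      calc ‖(x + y) ε‖ ≤ ‖x ε‖ + ‖y ε‖ := norm_add_le _ _
        _ ≤ (ε:ℝ) ^ a + (ε:ℝ) ^ b := add_le_add (ha ε hε₀) (hb ε hε₁)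
        _ ≤ (ε:ℝ) ^ (min a b - 1) := rpow_two_bound ε.2.1 hε2 a b
  neg_mem' := by
    rintro x ⟨a, ε₀, h₀, ha⟩
    exact ⟨a, ε₀, h₀, fun ε hε => by simpa using ha ε hε⟩
  mul_mem' := by
    rintro x y ⟨a, ε₀, h₀, ha⟩ ⟨b, ε₁, h₁, hb⟩
    refine ⟨a + b, min ε₀ ε₁, ⟨lt_min h₀.1 h₁.1, lt_of_le_of_lt (min_le_left _ _) h₀.2⟩,
      fun ε hε => ?_⟩
    have hε₀ : (ε:ℝ) ≤ ε₀ := le_trans hε (min_le_left _ _)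
    have hε₁ : (ε:ℝ) ≤ ε₁ := le_trans hε (min_le_right _ _)
    calc ‖(x * y) ε‖ = ‖x ε‖ * ‖y ε‖ := norm_mul _ _
      _ ≤ (ε:ℝ) ^ a * (ε:ℝ) ^ b :=
        mul_le_mul (ha ε hε₀) (hb ε hε₁) (norm_nonneg _) (Real.rpow_pos_of_pos ε.2.1 _).le
      _ = (ε:ℝ) ^ (a + b) := (Real.rpow_add ε.2.1 _ _).symm

theorem mem_moderate {f : Eps → K} (h : IsModerate K f) : f ∈ Moderate K := h

/-- The ideal of negligible nets in the ring of moderate nets. -/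
def Negligible : Ideal (Moderate K) where
  carrier := {x | IsNegligible K (x : Eps → K)}
  zero_mem' := by
    intro a
    refine ⟨1/2, by constructor <;> norm_num, fun ε _ => ?_⟩
    have : (0:ℝ) ≤ (ε:ℝ) ^ a := (Real.rpow_pos_of_pos ε.2.1 _).le
    simpa using this
  add_mem' := by
    intro x y hx hy a
    obtain ⟨ε₀, h₀, ha⟩ := hx (a + 1)
    obtain ⟨ε₁, h₁, hb⟩ := hy (a + 1)
    refine ⟨min (min ε₀ ε₁) (1/2), ⟨lt_min (lt_min h₀.1 h₁.1) (by norm_num), ?_⟩, fun ε hε => ?_⟩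
    · calc min (min ε₀ ε₁) (1/2) ≤ 1/2 := min_le_right _ _
        _ < 1 := by norm_num
    · have hε₀ : (ε:ℝ) ≤ ε₀ := le_trans hε (le_trans (min_le_left _ _) (min_le_left _ _))
      have hε₁ : (ε:ℝ) ≤ ε₁ := le_trans hε (le_trans (min_le_left _ _) (min_le_right _ _))
      have hε2 : (ε:ℝ) ≤ 1/2 := le_trans hε (min_le_right _ _)
      have hbd := rpow_two_bound (ε := (ε:ℝ)) ε.2.1 hε2 (a+1) (a+1)
      simp only [min_self, add_sub_cancel_right] at hbd
      calc ‖((x + y : Moderate K) : Eps → K) ε‖ ≤ ‖(x : Eps → K) ε‖ + ‖(y : Eps → K) ε‖ := by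
            push_cast
            exact norm_add_le _ _
        _ ≤ (ε:ℝ) ^ (a+1) + (ε:ℝ) ^ (a+1) := add_le_add (ha ε hε₀) (hb ε hε₁)
        _ ≤ (ε:ℝ) ^ a := hbd
  smul_mem' := by
    intro c x hx
    show IsNegligible K ((c * x : Moderate K) : Eps → K)
    intro a
    obtain ⟨b, ε₀, h₀, hc⟩ := c.property
    obtain ⟨ε₁, h₁, hxa⟩ := hx (a - b)
    refine ⟨min ε₀ ε₁, ⟨lt_min h₀.1 h₁.1, lt_of_le_of_lt (min_le_left _ _) h₀.2⟩,
      fun ε hε => ?_⟩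
    have hε₀ : (ε:ℝ) ≤ ε₀ := le_trans hε (min_le_left _ _)
    have hε₁ : (ε:ℝ) ≤ ε₁ := le_trans hε (min_le_right _ _)
    calc ‖((c * x : Moderate K) : Eps → K) ε‖ = ‖(c : Eps → K) ε‖ * ‖(x : Eps → K) ε‖ := by
          push_cast
          exact norm_mul _ _
      _ ≤ (ε:ℝ) ^ b * (ε:ℝ) ^ (a - b) :=
        mul_le_mul (hc ε hε₀) (hxa ε hε₁) (norm_nonneg _) (Real.rpow_pos_of_pos ε.2.1 _).le
      _ = (ε:ℝ) ^ a := by rw [← Real.rpow_add ε.2.1]; ring_nf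

/-- The ring of Colombeau generalized numbers: the quotient of the ring of
moderate nets by the ideal of negligible nets. -/
abbrev CGen : Type := Moderate K ⧸ Negligible K

/-- The quotient map. -/
abbrev cmk : Moderate K →+* CGen K := Ideal.Quotient.mk (Negligible K)

/-- A canonical representative of a Colombeau generalized number. -/
def rep (x : CGen K) : Moderate K := (Ideal.Quotient.mk_surjective x).choose

theorem rep_spec (x : CGen K) : cmk K (rep K x) = x :=
  (Ideal.Quotient.mk_surjective x).choose_spec

theorem indicator_moderate (S : Set Eps) :
    IsModerate K (fun ε => if ε ∈ S then (1:K) else 0) := by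
  refine ⟨0, 1/2, by constructor <;> norm_num, fun ε _ => ?_⟩
  rw [Real.rpow_zero]
  by_cases h : ε ∈ S <;> simp [h]

/-- `e_S`: the generalized number given by the characteristic function of `S ⊆ (0,1)`. -/
def eS (S : Set Eps) : CGen K :=
  cmk K ⟨fun ε => if ε ∈ S then (1:K) else 0, mem_moderate K (indicator_moderate K S)⟩

theorem absNet_moderate (f : Moderate K) :
    IsModerate K (fun ε => ((‖(f : Eps → K) ε‖ : ℝ) : K)) := by
  obtain ⟨a, ε₀, h₀, h⟩ := f.property
  refine ⟨a, ε₀, h₀, fun ε hε => ?_⟩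
  simpa [RCLike.norm_ofReal, abs_norm] using h ε hε

/-- `|x|`: the class of the net `(|x_ε|)_ε` (for any representative of `x`). -/
def absC (x : CGen K) : CGen K :=
  cmk K ⟨_, mem_moderate K (absNet_moderate K (rep K x))⟩

theorem minNet_moderate (f g : Moderate K) :
    IsModerate K (fun ε => ((min ‖(f : Eps → K) ε‖ ‖(g : Eps → K) ε‖ : ℝ) : K)) := by
  obtain ⟨a, ε₀, h₀, h⟩ := f.property
  refine ⟨a, ε₀, h₀, fun ε hε => ?_⟩
  rw [RCLike.norm_ofReal, abs_of_nonneg (le_min (norm_nonneg _) (norm_nonneg _))]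
  exact le_trans (min_le_left _ _) (h ε hε)

/-- `|x| ∧ |y|`: the class of the pointwise minimum of `(|x_ε|)_ε` and `(|y_ε|)_ε`. -/
def infAbs (x y : CGen K) : CGen K :=
  cmk K ⟨_, mem_moderate K (minNet_moderate K (rep K x) (rep K y))⟩

theorem sqrtNet_moderate (f : Moderate K) :
    IsModerate K (fun ε => ((Real.sqrt ‖(f : Eps → K) ε‖ : ℝ) : K)) := by
  obtain ⟨a, ε₀, h₀, h⟩ := f.property
  refine ⟨a / 2, ε₀, h₀, fun ε hε => ?_⟩
  rw [RCLike.norm_ofReal, abs_of_nonneg (Real.sqrt_nonneg _)]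
  calc Real.sqrt ‖(f : Eps → K) ε‖ ≤ Real.sqrt ((ε:ℝ) ^ a) := Real.sqrt_le_sqrt (h ε hε)
    _ = (ε:ℝ) ^ (a / 2) := by
        rw [Real.sqrt_eq_rpow, ← Real.rpow_mul ε.2.1.le]
        ring_nf

/-- `√|x|`: the class of the net `(√|x_ε|)_ε` (for any representative of `x`). -/
def sqrtAbs (x : CGen K) : CGen K :=
  cmk K ⟨_, mem_moderate K (sqrtNet_moderate K (rep K x))⟩

/-- The annihilator `Ann(a) = {x : x·a = 0}` as an ideal. -/
def annIdeal (a : CGen K) : Ideal (CGen K) where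
  carrier := {x | x * a = 0}
  zero_mem' := by simp
  add_mem' := by
    intro x y hx hy
    show (x + y) * a = 0
    rw [add_mul, hx, hy, add_zero]
  smul_mem' := by
    intro c x hx
    show c * x * a = 0
    rw [mul_assoc, hx, mul_zero]

/-- The order relation on `𝕂̃`: `x ≤ y` iff there exist (real-valued) representatives
`(u_ε)_ε` of `x` and `(v_ε)_ε` of `y` with `u_ε ≤ v_ε` for all `ε`. -/
def leC (x y : CGen K) : Prop :=
  ∃ u v : Moderate K, cmk K u = x ∧ cmk K v = y ∧
    ∀ ε : Eps, ∃ r s : ℝ, (u : Eps → K) ε = (r : K) ∧ (v : Eps → K) ε = (s : K) ∧ r ≤ s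

/-- A z-ideal: if `b ∈ I` and `a` belongs to exactly the same maximal ideals as `b`,
then `a ∈ I`. -/
def IsZIdeal (I : Ideal (CGen K)) : Prop :=
  ∀ a b : CGen K, b ∈ I →
    (∀ M : Ideal (CGen K), M.IsMaximal → (a ∈ M ↔ b ∈ M)) → a ∈ I


/-! ### Auxiliary machinery for stmt5 -/

theorem coeFn_sub (u v : Moderate K) :
    ((u - v : Moderate K) : Eps → K) = fun ε => (u : Eps → K) ε - (v : Eps → K) ε := rfl

theorem coeFn_mul (u v : Moderate K) :
    ((u * v : Moderate K) : Eps → K) = fun ε => (u : Eps → K) ε * (v : Eps → K) ε := rfl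

theorem coeFn_add (u v : Moderate K) :
    ((u + v : Moderate K) : Eps → K) = fun ε => (u : Eps → K) ε + (v : Eps → K) ε := rfl

/-- If the difference of two moderate nets is negligible, the classes agree. -/
theorem cmk_eq_of_negligible (u v : Moderate K)
    (h : IsNegligible K (fun ε => (u : Eps → K) ε - (v : Eps → K) ε)) :
    cmk K u = cmk K v := by
  rw [Ideal.Quotient.eq]
  show IsNegligible K ((u - v : Moderate K) : Eps → K)
  rw [coeFn_sub]
  exact h

/-- Domination: if `‖f_ε‖ ≤ ‖g_ε‖` pointwise then the class of `f` is a multiple of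
the class of `g`; in particular it lies in any ideal containing the class of `g`. -/
theorem dominate (f g : Moderate K) (h : ∀ ε : Eps, ‖(f : Eps → K) ε‖ ≤ ‖(g : Eps → K) ε‖)
    (I : Ideal (CGen K)) (hg : cmk K g ∈ I) : cmk K f ∈ I := by
  classical
  set c : Eps → K := fun ε =>
    if (g : Eps → K) ε = 0 then 0 else (f : Eps → K) ε / (g : Eps → K) ε with hc_def
  have hc : IsModerate K c := by
    refine ⟨0, 1/2, by constructor <;> norm_num, fun ε _ => ?_⟩
    rw [Real.rpow_zero]
    by_cases hz : (g : Eps → K) ε = 0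
    · simp [hc_def, hz]
    · have hgpos : 0 < ‖(g : Eps → K) ε‖ := norm_pos_iff.mpr hz
      simp only [hc_def, if_neg hz, norm_div]
      rw [div_le_one hgpos]
      exact h ε
  have key : (⟨c, mem_moderate K hc⟩ : Moderate K) * g = f := by
    apply Subtype.ext
    funext ε
    show c ε * (g : Eps → K) ε = (f : Eps → K) ε
    by_cases hz : (g : Eps → K) ε = 0
    · have hf0 : (f : Eps → K) ε = 0 := by
        have := h ε
        rw [hz, norm_zero] at this
        exact norm_le_zero_iff.mp this
      simp [hc_def, hz, hf0]
    · simp only [hc_def, if_neg hz]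
      field_simp
  have : cmk K f = cmk K ⟨c, mem_moderate K hc⟩ * cmk K g := by
    rw [← map_mul, key]
  rw [this]
  exact I.mul_mem_left _ hg

/-- The indicator element of `S` in the ring of moderate nets. -/
def indE (S : Set Eps) : Moderate K :=
  ⟨fun ε => if ε ∈ S then (1:K) else 0, mem_moderate K (indicator_moderate K S)⟩

theorem eS_eq (S : Set Eps) : eS K S = cmk K (indE K S) := rfl

theorem coeFn_indE (S : Set Eps) (ε : Eps) :
    ((indE K S : Moderate K) : Eps → K) ε = if ε ∈ S then (1:K) else 0 := rfl

theorem coeFn_zero (ε : Eps) : ((0 : Moderate K) : Eps → K) ε = 0 := rfl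

theorem coeFn_one (ε : Eps) : ((1 : Moderate K) : Eps → K) ε = 1 := rfl

theorem indE_mul_compl (S : Set Eps) : indE K S * indE K Sᶜ = 0 := by
  apply Subtype.ext
  funext ε
  rw [coeFn_mul]
  simp only [coeFn_indE, coeFn_zero]
  by_cases hεS : ε ∈ S
  · simp [hεS]
  · simp [hεS]

theorem indE_add_compl (S : Set Eps) : indE K S + indE K Sᶜ = 1 := by
  apply Subtype.ext
  funext ε
  rw [coeFn_add]
  simp only [coeFn_indE, coeFn_one]
  by_cases hεS : ε ∈ S
  · simp [hεS]
  · simp [hεS]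

/-- The absolute-value element of a moderate net. -/
def absE (f : Moderate K) : Moderate K :=
  ⟨fun ε => ((‖(f : Eps → K) ε‖ : ℝ) : K), mem_moderate K (absNet_moderate K f)⟩

/-- The square-root-of-absolute-value element of a moderate net. -/
def sqrtE (f : Moderate K) : Moderate K :=
  ⟨fun ε => ((Real.sqrt ‖(f : Eps → K) ε‖ : ℝ) : K), mem_moderate K (sqrtNet_moderate K f)⟩

theorem sqrtAbs_eq (x : CGen K) : sqrtAbs K x = cmk K (sqrtE K (rep K x)) := rfl

theorem sqrtE_mul_self (f : Moderate K) : sqrtE K f * sqrtE K f = absE K f := by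
  apply Subtype.ext
  funext ε
  show ((Real.sqrt ‖(f : Eps → K) ε‖ : ℝ) : K) * ((Real.sqrt ‖(f : Eps → K) ε‖ : ℝ) : K)
      = ((‖(f : Eps → K) ε‖ : ℝ) : K)
  rw [← RCLike.ofReal_mul, Real.mul_self_sqrt (norm_nonneg _)]

theorem norm_absE (f : Moderate K) (ε : Eps) :
    ‖((absE K f : Moderate K) : Eps → K) ε‖ = ‖(f : Eps → K) ε‖ := by
  show ‖((‖(f : Eps → K) ε‖ : ℝ) : K)‖ = ‖(f : Eps → K) ε‖
  rw [RCLike.norm_ofReal, abs_norm]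

/-- `x ∈ I` iff `|x| ∈ I` (via the given representatives), by domination both ways. -/
theorem absE_mem_iff (f : Moderate K) (I : Ideal (CGen K)) :
    cmk K (absE K f) ∈ I ↔ cmk K f ∈ I := by
  constructor
  · intro h
    exact dominate K f (absE K f) (fun ε => (norm_absE K f ε).symm.le) I h
  · intro h
    exact dominate K (absE K f) f (fun ε => (norm_absE K f ε).le) I h

theorem sqrt_abs_sub (p q : ℝ) (hp : 0 ≤ p) (hq : 0 ≤ q) :
    |Real.sqrt p - Real.sqrt q| ≤ Real.sqrt |p - q| := by
  have key : ∀ s t : ℝ, 0 ≤ s → 0 ≤ t → t ≤ s →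
      Real.sqrt s - Real.sqrt t ≤ Real.sqrt (s - t) := by
    intro s t hs ht hts
    have h1 : Real.sqrt s ≤ Real.sqrt t + Real.sqrt (s - t) := by
      have h2 : s ≤ (Real.sqrt t + Real.sqrt (s - t)) ^ 2 := by
        have e1 : Real.sqrt t * Real.sqrt t = t := Real.mul_self_sqrt ht
        have e2 : Real.sqrt (s - t) * Real.sqrt (s - t) = s - t :=
          Real.mul_self_sqrt (by linarith)
        have h3 : 0 ≤ Real.sqrt t * Real.sqrt (s - t) := by positivity
        nlinarith
      calc Real.sqrt s ≤ Real.sqrt ((Real.sqrt t + Real.sqrt (s - t)) ^ 2) :=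
            Real.sqrt_le_sqrt h2
        _ = Real.sqrt t + Real.sqrt (s - t) := Real.sqrt_sq (by positivity)
    linarith
  rcases le_total q p with hqp | hpq
  · have h1 : Real.sqrt q ≤ Real.sqrt p := Real.sqrt_le_sqrt hqp
    rw [abs_of_nonneg (sub_nonneg.mpr h1), abs_of_nonneg (sub_nonneg.mpr hqp)]
    exact key p q hp hq hqp
  · have h1 : Real.sqrt p ≤ Real.sqrt q := Real.sqrt_le_sqrt hpq
    rw [abs_of_nonpos (sub_nonpos.mpr h1), abs_of_nonpos (sub_nonpos.mpr hpq),
      neg_sub, neg_sub]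
    exact key q p hq hp hpq

/-- `√|w| - |f|` is negligible when `w - f·f` is. -/
theorem sqrtE_sub_absE_negligible (w f : Moderate K)
    (hn : IsNegligible K (fun ε => (w : Eps → K) ε - ((f * f : Moderate K) : Eps → K) ε)) :
    IsNegligible K (fun ε =>
      ((sqrtE K w : Moderate K) : Eps → K) ε - ((absE K f : Moderate K) : Eps → K) ε) := by
  intro a
  obtain ⟨ε₀, h₀, hb⟩ := hn (2 * a)
  refine ⟨ε₀, h₀, fun ε hε => ?_⟩
  have hεpos : (0:ℝ) < (ε:ℝ) := ε.2.1
  have step1 : ‖((sqrtE K w : Moderate K) : Eps → K) ε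
      - ((absE K f : Moderate K) : Eps → K) ε‖
      = |Real.sqrt ‖(w : Eps → K) ε‖ - ‖(f : Eps → K) ε‖| := by
    show ‖((Real.sqrt ‖(w : Eps → K) ε‖ : ℝ) : K) - ((‖(f : Eps → K) ε‖ : ℝ) : K)‖ = _
    rw [← RCLike.ofReal_sub, RCLike.norm_ofReal]
  rw [step1]
  have e1 : ‖(f : Eps → K) ε‖ = Real.sqrt ‖((f * f : Moderate K) : Eps → K) ε‖ := by
    rw [coeFn_mul]
    simp only
    rw [norm_mul, Real.sqrt_mul_self (norm_nonneg _)]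
  rw [e1]
  have h2 : |Real.sqrt ‖(w : Eps → K) ε‖ - Real.sqrt ‖((f * f : Moderate K) : Eps → K) ε‖|
      ≤ Real.sqrt |‖(w : Eps → K) ε‖ - ‖((f * f : Moderate K) : Eps → K) ε‖| :=
    sqrt_abs_sub _ _ (norm_nonneg _) (norm_nonneg _)
  have h3 : |‖(w : Eps → K) ε‖ - ‖((f * f : Moderate K) : Eps → K) ε‖|
      ≤ ‖(w : Eps → K) ε - ((f * f : Moderate K) : Eps → K) ε‖ :=
    abs_norm_sub_norm_le _ _
  have h4 := hb ε hε
  calc |Real.sqrt ‖(w : Eps → K) ε‖ - Real.sqrt ‖((f * f : Moderate K) : Eps → K) ε‖|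
      ≤ Real.sqrt |‖(w : Eps → K) ε‖ - ‖((f * f : Moderate K) : Eps → K) ε‖| := h2
    _ ≤ Real.sqrt ((ε:ℝ) ^ (2 * a)) := Real.sqrt_le_sqrt (le_trans h3 h4)
    _ = (ε:ℝ) ^ a := by
        rw [Real.sqrt_eq_rpow, ← Real.rpow_mul hεpos.le]
        ring_nf

/-- The key implication: the (eS)-pseudoprime and radical conditions imply primeness. -/
theorem key_prime (I : Ideal (CGen K)) (hI : I ≠ ⊤)
    (H1 : ∀ S : Set Eps, eS K S ∈ I ∨ eS K Sᶜ ∈ I)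
    (H2 : ∀ x : CGen K, x * x ∈ I → x ∈ I) : I.IsPrime := by
  classical
  refine ⟨hI, ?_⟩
  intro a b hab
  set f : Moderate K := rep K a with hf_def
  set g : Moderate K := rep K b with hg_def
  have hfa : cmk K f = a := rep_spec K a
  have hgb : cmk K g = b := rep_spec K b
  have hfg : cmk K (f * g) ∈ I := by
    rw [map_mul, hfa, hgb]; exact hab
  -- the min net
  set M : Moderate K := ⟨_, mem_moderate K (minNet_moderate K f g)⟩ with hM_def
  have hMnorm : ∀ ε : Eps, ‖(M : Eps → K) ε‖ = min ‖(f : Eps → K) ε‖ ‖(g : Eps → K) ε‖ := by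
    intro ε
    show ‖((min ‖(f : Eps → K) ε‖ ‖(g : Eps → K) ε‖ : ℝ) : K)‖ = _
    rw [RCLike.norm_ofReal, abs_of_nonneg (le_min (norm_nonneg _) (norm_nonneg _))]
  have hM2 : cmk K (M * M) ∈ I := by
    apply dominate K (M * M) (f * g) _ I hfg
    intro ε
    rw [coeFn_mul, coeFn_mul]
    simp only
    rw [norm_mul, norm_mul, hMnorm]
    exact mul_le_mul (min_le_left _ _) (min_le_right _ _)
      (le_min (norm_nonneg _) (norm_nonneg _)) (norm_nonneg _)
  have hM : cmk K M ∈ I := by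
    apply H2
    rw [← map_mul]
    exact hM2
  set S : Set Eps := {ε | ‖(f : Eps → K) ε‖ ≤ ‖(g : Eps → K) ε‖} with hS_def
  have hSf : cmk K (indE K S * f) ∈ I := by
    apply dominate K _ M _ I hM
    intro ε
    rw [coeFn_mul]
    simp only
    rw [norm_mul, hMnorm]
    by_cases hεS : ε ∈ S
    · have h1 : ‖(f : Eps → K) ε‖ ≤ ‖(g : Eps → K) ε‖ := hεS
      show ‖((indE K S : Moderate K) : Eps → K) ε‖ * _ ≤ _
      have : ((indE K S : Moderate K) : Eps → K) ε = 1 := if_pos hεS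
      rw [this, norm_one, one_mul, min_eq_left h1]
    · have : ((indE K S : Moderate K) : Eps → K) ε = 0 := if_neg hεS
      rw [this, norm_zero, zero_mul]
      exact le_min (norm_nonneg _) (norm_nonneg _)
  have hScg : cmk K (indE K Sᶜ * g) ∈ I := by
    apply dominate K _ M _ I hM
    intro ε
    rw [coeFn_mul]
    simp only
    rw [norm_mul, hMnorm]
    by_cases hεS : ε ∈ Sᶜ
    · have h1 : ‖(g : Eps → K) ε‖ ≤ ‖(f : Eps → K) ε‖ := le_of_not_ge hεS
      have : ((indE K Sᶜ : Moderate K) : Eps → K) ε = 1 := if_pos hεS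
      rw [this, norm_one, one_mul, min_eq_right h1]
    · have : ((indE K Sᶜ : Moderate K) : Eps → K) ε = 0 := if_neg hεS
      rw [this, norm_zero, zero_mul]
      exact le_min (norm_nonneg _) (norm_nonneg _)
  rcases H1 S with hs | hsc
  · right
    have hdecomp : b = cmk K (indE K S * g) + cmk K (indE K Sᶜ * g) := by
      rw [← map_add, ← add_mul, indE_add_compl, one_mul, hgb]
    have h1 : cmk K (indE K S * g) ∈ I := by
      rw [map_mul]
      exact I.mul_mem_right _ hs
    rw [hdecomp]
    exact I.add_mem h1 hScg
  · left
    have hdecomp : a = cmk K (indE K S * f) + cmk K (indE K Sᶜ * f) := by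
      rw [← map_add, ← add_mul, indE_add_compl, one_mul, hfa]
    have h2 : cmk K (indE K Sᶜ * f) ∈ I := by
      rw [map_mul]
      exact I.mul_mem_right _ hsc
    rw [hdecomp]
    exact I.add_mem hSf h2


/-- a proper ideal `I` of `𝕂̃` is prime iff it is pseudoprime and
radical; explicitly, iff (`∀ S ⊆ (0,1)`, `e_S ∈ I` or `e_{∁S} ∈ I`) and
(`∀ x ∈ I`, the class of `(√|x_ε|)_ε` belongs to `I`). -/
theorem stmt5 (I : Ideal (CGen K)) (hI : I ≠ ⊤) :
    (I.IsPrime ↔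
      (∀ a b : CGen K, a * b = 0 → a ∈ I ∨ b ∈ I) ∧ (∀ x : CGen K, x * x ∈ I → x ∈ I)) ∧
    (I.IsPrime ↔
      (∀ S : Set Eps, eS K S ∈ I ∨ eS K Sᶜ ∈ I) ∧ (∀ x ∈ I, sqrtAbs K x ∈ I)) := by
  have hpseudo_of_prime : I.IsPrime → ∀ a b : CGen K, a * b = 0 → a ∈ I ∨ b ∈ I := by
    intro hp a b hab
    exact hp.mem_or_mem (by rw [hab]; exact I.zero_mem)
  have hrad_of_prime : I.IsPrime → ∀ x : CGen K, x * x ∈ I → x ∈ I := by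
    intro hp x hx
    rcases hp.mem_or_mem hx with h | h <;> exact h
  have heS_prod : ∀ S : Set Eps, eS K S * eS K Sᶜ = 0 := by
    intro S
    rw [eS_eq, eS_eq, ← map_mul, indE_mul_compl, map_zero]
  have heS_of_pseudo : (∀ a b : CGen K, a * b = 0 → a ∈ I ∨ b ∈ I) →
      ∀ S : Set Eps, eS K S ∈ I ∨ eS K Sᶜ ∈ I := fun hp S => hp _ _ (heS_prod S)
  have hsqrt_of_prime : I.IsPrime → ∀ x ∈ I, sqrtAbs K x ∈ I := by
    intro hp x hx
    have hfx : cmk K (rep K x) ∈ I := by rw [rep_spec]; exact hx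
    have habs : cmk K (absE K (rep K x)) ∈ I := (absE_mem_iff K _ I).mpr hfx
    have hsq : sqrtAbs K x * sqrtAbs K x ∈ I := by
      rw [sqrtAbs_eq, ← map_mul, sqrtE_mul_self]
      exact habs
    rcases hp.mem_or_mem hsq with h | h <;> exact h
  have hrad_of_sqrt : (∀ x ∈ I, sqrtAbs K x ∈ I) → ∀ x : CGen K, x * x ∈ I → x ∈ I := by
    intro hs x hx
    have h1 : sqrtAbs K (x * x) ∈ I := hs _ hx
    have hcw : cmk K (rep K (x * x)) = cmk K (rep K x * rep K x) := by
      rw [map_mul, rep_spec, rep_spec]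
    have hmem : (rep K (x * x) - rep K x * rep K x : Moderate K) ∈ Negligible K :=
      Ideal.Quotient.eq.mp hcw
    have hneg : IsNegligible K
        ((rep K (x * x) - rep K x * rep K x : Moderate K) : Eps → K) := hmem
    rw [coeFn_sub] at hneg
    have heq : cmk K (sqrtE K (rep K (x * x))) = cmk K (absE K (rep K x)) :=
      cmk_eq_of_negligible K _ _ (sqrtE_sub_absE_negligible K _ _ hneg)
    have h2 : cmk K (absE K (rep K x)) ∈ I := by
      rw [← heq]
      exact h1
    have h3 := (absE_mem_iff K (rep K x) I).mp h2
    rw [rep_spec] at h3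
    exact h3
  constructor
  · constructor
    · intro hp
      exact ⟨hpseudo_of_prime hp, hrad_of_prime hp⟩
    · rintro ⟨hps, hrad⟩
      exact key_prime K I hI (heS_of_pseudo hps) hrad
  · constructor
    · intro hp
      exact ⟨fun S => hp.mem_or_mem (by rw [heS_prod S]; exact I.zero_mem),
        hsqrt_of_prime hp⟩
    · rintro ⟨h1, h2⟩
      exact key_prime K I hI h1 (hrad_of_sqrt h2)



end
end

section
/- If I and J are proper pseudoprime ideals of 𝕂̃, then I + J equals I, or J, or all of 𝕂̃. -/
noncomputable section

set_option maxHeartbeats 1000000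
set_option synthInstance.maxHeartbeats 400000

open scoped Classical

variable (K : Type) [RCLike K]

lemma eS_mul_compl (S : Set Eps) : eS K S * eS K Sᶜ = 0 := by
  unfold eS
  rw [← map_mul]
  convert map_zero (cmk K) using 2
  apply Subtype.ext
  funext ε
  by_cases h : ε ∈ S <;>
    simp [h, MulMemClass.coe_mul, Pi.mul_apply, ZeroMemClass.coe_zero]

lemma eS_add_compl (S : Set Eps) : eS K S + eS K Sᶜ = 1 := by
  unfold eS
  rw [← map_add]
  convert map_one (cmk K) using 2
  apply Subtype.ext
  funext ε
  by_cases h : ε ∈ S <;>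
    simp [h, AddMemClass.coe_add, Pi.add_apply, OneMemClass.coe_one]

lemma div_lemma (f g : Moderate K) (S : Set Eps)
    (hS : ∀ ε ∈ S, ‖(f : Eps → K) ε‖ ≤ ‖(g : Eps → K) ε‖) :
    ∃ s : Moderate K, cmk K s * cmk K g = eS K S * cmk K f := by
  set snet : Eps → K := fun ε => if ε ∈ S then (f : Eps → K) ε / (g : Eps → K) ε else 0
    with hsnet
  have hmod : IsModerate K snet := by
    refine ⟨0, 1/2, by constructor <;> norm_num, fun ε _ => ?_⟩
    rw [Real.rpow_zero]
    by_cases h : ε ∈ S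
    · rw [hsnet]
      simp only [if_pos h, norm_div]
      rcases eq_or_ne ((g : Eps → K) ε) 0 with hg | hg
      · simp [hg]
      · exact (div_le_one (norm_pos_iff.mpr hg)).mpr (hS ε h)
    · simp [hsnet, h]
  refine ⟨⟨snet, mem_moderate K hmod⟩, ?_⟩
  unfold eS
  rw [← map_mul, ← map_mul]
  congr 1
  apply Subtype.ext
  funext ε
  show snet ε * (g : Eps → K) ε = (if ε ∈ S then (1:K) else 0) * (f : Eps → K) ε
  by_cases h : ε ∈ S
  · simp only [hsnet, if_pos h, one_mul]
    rcases eq_or_ne ((g : Eps → K) ε) 0 with hg | hg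
    · have hf : (f : Eps → K) ε = 0 := by
        have := hS ε h
        rw [hg, norm_zero] at this
        exact norm_le_zero_iff.mp this
      simp [hg, hf]
    · field_simp
  · simp [hsnet, h]

/-- if `I` and `J` are proper pseudoprime ideals of `𝕂̃`,
then `I + J ∈ {I, J, 𝕂̃}`. -/
theorem stmt7 (I J : Ideal (CGen K)) (hI : I ≠ ⊤) (hJ : J ≠ ⊤)
    (hIp : ∀ a b : CGen K, a * b = 0 → a ∈ I ∨ b ∈ I)
    (hJp : ∀ a b : CGen K, a * b = 0 → a ∈ J ∨ b ∈ J) :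
    I + J = I ∨ I + J = J ∨ I + J = ⊤ := by
  by_cases htop : I + J = ⊤
  · right; right; exact htop
  have htop' : I ⊔ J ≠ ⊤ := by rwa [← Submodule.add_eq_sup]
  have key : I ≤ J ∨ J ≤ I := by
    by_contra hc
    push_neg at hc
    obtain ⟨hIJ, hJI⟩ := hc
    obtain ⟨x, hxI, hxJ⟩ := SetLike.not_le_iff_exists.mp hIJ
    obtain ⟨y, hyJ, hyI⟩ := SetLike.not_le_iff_exists.mp hJI
    set f := rep K x with hf
    set g := rep K y with hg
    set S : Set Eps := {ε | ‖(f : Eps → K) ε‖ ≤ ‖(g : Eps → K) ε‖} with hSdef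
    obtain ⟨s, hs⟩ := div_lemma K f g S (fun ε h => h)
    obtain ⟨t, ht⟩ := div_lemma K g f Sᶜ (fun ε h => (not_le.mp (fun hle => h hle)).le)
    rw [rep_spec, rep_spec] at hs ht
    -- eS S * x ∈ J, eS Sᶜ * y ∈ I
    have hx1 : eS K S * x ∈ J := by rw [← hs]; exact Ideal.mul_mem_left J _ hyJ
    have hy1 : eS K Sᶜ * y ∈ I := by rw [← ht]; exact Ideal.mul_mem_left I _ hxI
    have hone : eS K S + eS K Sᶜ = 1 := eS_add_compl K S
    have hzero : eS K S * eS K Sᶜ = 0 := eS_mul_compl K S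
    have hItop : eS K S ∈ I → eS K Sᶜ ∈ J → False := by
      intro h1 h2
      exact htop' (Ideal.eq_top_iff_one _ |>.mpr
        (hone ▸ Submodule.add_mem_sup h1 h2))
    have hJtop : eS K S ∈ J → eS K Sᶜ ∈ I → False := by
      intro h1 h2
      apply htop'
      rw [Ideal.eq_top_iff_one]
      have hmem := Submodule.add_mem_sup h2 h1
      rwa [add_comm, hone] at hmem
    rcases hIp _ _ hzero with hI1 | hI1 <;> rcases hJp _ _ hzero with hJ1 | hJ1
    · -- eS S ∈ I, eS S ∈ J : y ∈ I, contradiction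
      apply hyI
      have : (eS K S + eS K Sᶜ) * y ∈ I :=
        add_mul (eS K S) (eS K Sᶜ) y ▸
          I.add_mem (Ideal.mul_mem_right y I hI1) hy1
      rwa [hone, one_mul] at this
    · exact (hItop hI1 hJ1).elim
    · exact (hJtop hJ1 hI1).elim
    · -- eS Sᶜ ∈ I, eS Sᶜ ∈ J : x ∈ J, contradiction
      apply hxJ
      have : (eS K S + eS K Sᶜ) * x ∈ J :=
        add_mul (eS K S) (eS K Sᶜ) x ▸
          J.add_mem hx1 (Ideal.mul_mem_right x J hJ1)
      rwa [hone, one_mul] at this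
  rcases key with h | h
  · right; left; rw [Submodule.add_eq_sup]; exact sup_eq_right.mpr h
  · left; rw [Submodule.add_eq_sup]; exact sup_eq_left.mpr h


end
end
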